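/- arXiv:2405.05626 — 2 statements merged into one kernel-verified Lean document; each statement's English description precedes it below -/
import Mathlib

section
/- Fix integers N ≥ 1, M ≥ 1, p̄ ≥ 1 and a real ε > 0. Let λ_1, …, λ_p̄ > 0 and let Λ ∈ ℝ^{p̄×p̄} be the diagonal matrix with entries λ_p. Let Φ ∈ ℝ^{N×p̄} be a matrix satisfying |(ΦᵀΦ)_{pq}/N − δ_{pq}| < ε/p̄ for all p, q ∈ {1,…,p̄}, where δ_{pq} is the Kronecker delta. Let R ∈ ℝ^{N×N} be a diagonal matrix whose diagonal entries are all ≥ r_min for some r_min > 0. Then for every vector φ ∈ ℝ^{p̄}, the matrix ΦΛΦᵀ + R/M is invertible and φᵀΛφ − φᵀΛΦᵀ(ΦΛΦᵀ + R/M)^{-1}ΦΛφ ≥ (1 − ε) Σ_{p=1}^{p̄} (r_min λ_p)/(r_min + N M λ_p) · φ_p². -/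
open Matrix


lemma aux_key_inv {n m : Type*} [Fintype n] [Fintype m] [DecidableEq n] [DecidableEq m]
    (L : Matrix m m ℝ) (S : Matrix n n ℝ) (Φ : Matrix n m ℝ)
    [Invertible L] [Invertible S] [Invertible (Φ * L * Φᵀ + S)] :
    (L⁻¹ + Φᵀ * S⁻¹ * Φ) * (L - L * Φᵀ * (Φ * L * Φᵀ + S)⁻¹ * Φ * L) = 1 := by
  have push : (L⁻¹ + Φᵀ * S⁻¹ * Φ) * (L * Φᵀ) = Φᵀ * S⁻¹ * (Φ * L * Φᵀ + S) := by
    rw [Matrix.add_mul, Matrix.inv_mul_cancel_left_of_invertible, Matrix.mul_add,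
      Matrix.inv_mul_cancel_right_of_invertible, add_comm]
    simp only [Matrix.mul_assoc]
  rw [Matrix.mul_sub]
  have e1 : (L⁻¹ + Φᵀ * S⁻¹ * Φ) * (L * Φᵀ * (Φ * L * Φᵀ + S)⁻¹ * Φ * L)
      = ((L⁻¹ + Φᵀ * S⁻¹ * Φ) * (L * Φᵀ)) * ((Φ * L * Φᵀ + S)⁻¹ * (Φ * L)) := by
    simp only [Matrix.mul_assoc]
  rw [e1, push, Matrix.mul_assoc (Φᵀ * S⁻¹), Matrix.mul_inv_cancel_left_of_invertible,
    Matrix.add_mul, Matrix.inv_mul_of_invertible]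
  simp only [Matrix.mul_assoc]
  exact add_sub_cancel_right 1 _


lemma aux_gram {N pbar : ℕ} (hN : 1 ≤ N) (hpbar : 1 ≤ pbar) (ε : ℝ) (hε : 0 ≤ ε)
    (Φ : Matrix (Fin N) (Fin pbar) ℝ)
    (hΦ : ∀ p q, |(Φᵀ * Φ) p q / (N : ℝ) - (if p = q then 1 else 0)| < ε / (pbar : ℝ))
    (x : Fin pbar → ℝ) :
    x ⬝ᵥ ((Φᵀ * Φ) *ᵥ x) ≤ (N : ℝ) * (1 + ε) * ∑ p, x p ^ 2 := by
  set G := Φᵀ * Φ with hG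
  have hNpos : (0:ℝ) < N := by exact_mod_cast hN
  have hppos : (0:ℝ) < pbar := by exact_mod_cast hpbar
  have he : ∀ p q : Fin pbar, G p q * (x p * x q) ≤
      (N:ℝ) * (if p = q then 1 else 0) * (x p * x q)
        + (N:ℝ) * ε / (pbar:ℝ) * (|x p| * |x q|) := by
    intro p q
    have h1 := (hΦ p q).le
    have h2 : |G p q - (N:ℝ) * (if p = q then 1 else 0)| ≤ (N:ℝ) * ε / (pbar:ℝ) := by
      have h3 : G p q - (N:ℝ) * (if p = q then 1 else 0)
          = (N:ℝ) * (G p q / (N:ℝ) - (if p = q then 1 else 0)) := by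
        field_simp
      rw [h3, abs_mul, abs_of_pos hNpos]
      calc (N:ℝ) * |G p q / (N:ℝ) - (if p = q then 1 else 0)|
          ≤ (N:ℝ) * (ε / (pbar:ℝ)) := by
            exact mul_le_mul_of_nonneg_left h1 hNpos.le
        _ = (N:ℝ) * ε / (pbar:ℝ) := by ring
    have h4 : (G p q - (N:ℝ) * (if p = q then 1 else 0)) * (x p * x q)
        ≤ (N:ℝ) * ε / (pbar:ℝ) * (|x p| * |x q|) := by
      calc (G p q - (N:ℝ) * (if p = q then 1 else 0)) * (x p * x q)
          ≤ |(G p q - (N:ℝ) * (if p = q then 1 else 0)) * (x p * x q)| := le_abs_self _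
        _ = |G p q - (N:ℝ) * (if p = q then 1 else 0)| * (|x p| * |x q|) := by
            rw [abs_mul, abs_mul]
        _ ≤ (N:ℝ) * ε / (pbar:ℝ) * (|x p| * |x q|) :=
            mul_le_mul_of_nonneg_right h2 (by positivity)
    nlinarith [h4]
  have hdot : x ⬝ᵥ (G *ᵥ x) = ∑ p, ∑ q, G p q * (x p * x q) := by
    simp only [dotProduct, mulVec, Finset.mul_sum]
    exact Finset.sum_congr rfl fun p _ => Finset.sum_congr rfl fun q _ => by ring
  rw [hdot]
  have step1 : ∑ p, ∑ q, G p q * (x p * x q)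
      ≤ ∑ p : Fin pbar, ∑ q : Fin pbar, ((N:ℝ) * (if p = q then 1 else 0) * (x p * x q)
          + (N:ℝ) * ε / (pbar:ℝ) * (|x p| * |x q|)) :=
    Finset.sum_le_sum fun p _ => Finset.sum_le_sum fun q _ => he p q
  refine step1.trans ?_
  have e1 : ∑ p : Fin pbar, ∑ q : Fin pbar, (N:ℝ) * (if p = q then 1 else 0) * (x p * x q)
      = (N:ℝ) * ∑ p, x p ^ 2 := by
    rw [Finset.mul_sum]
    refine Finset.sum_congr rfl fun p _ => ?_
    rw [Finset.sum_eq_single p]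
    · simp [sq]
    · intro q _ hq; simp [(Ne.symm hq : ¬ p = q)]
    · simp
  have e2 : ∑ p : Fin pbar, ∑ q : Fin pbar, (N:ℝ) * ε / (pbar:ℝ) * (|x p| * |x q|)
      = (N:ℝ) * ε / (pbar:ℝ) * (∑ p, |x p|) ^ 2 := by
    rw [sq, Finset.sum_mul_sum, Finset.mul_sum]
    exact Finset.sum_congr rfl fun p _ => by rw [Finset.mul_sum]
  have e3 : (∑ p, |x p|) ^ 2 ≤ (pbar:ℝ) * ∑ p, x p ^ 2 := by
    have := sq_sum_le_card_mul_sum_sq (s := (Finset.univ : Finset (Fin pbar))) (f := fun p => |x p|)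
    simpa [sq_abs, Finset.card_univ] using this
  simp only [Finset.sum_add_distrib]
  rw [e1, e2]
  have e4 : (N:ℝ) * ε / (pbar:ℝ) * (∑ p, |x p|) ^ 2 ≤ (N:ℝ) * ε * ∑ p, x p ^ 2 := by
    calc (N:ℝ) * ε / (pbar:ℝ) * (∑ p, |x p|) ^ 2
        ≤ (N:ℝ) * ε / (pbar:ℝ) * ((pbar:ℝ) * ∑ p, x p ^ 2) :=
          mul_le_mul_of_nonneg_left e3 (by positivity)
      _ = (N:ℝ) * ε * ∑ p, x p ^ 2 := by field_simp
  have e5 : (N:ℝ) * (1 + ε) * ∑ p, x p ^ 2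
      = (N:ℝ) * ∑ p, x p ^ 2 + (N:ℝ) * ε * ∑ p, x p ^ 2 := by ring
  linarith

/-- deterministic core of the lower bound on the heteroscedastic GP
posterior variance for a degenerate kernel.  For `N, M, p̄ ≥ 1`, `ε > 0`, positive
eigenvalues `λ_p`, a feature matrix `Φ` whose normalized Gram matrix is entrywise
`ε/p̄`-close to the identity, and a diagonal noise matrix `R` with diagonal entries
`≥ r_min > 0`, the matrix `ΦΛΦᵀ + R/M` is invertible and the posterior variance
quadratic form at any `φ` is bounded below by
`(1 − ε) Σ_p r_min λ_p/(r_min + N M λ_p) φ_p²`. -/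
theorem stmt_0 (N M pbar : ℕ) (hN : 1 ≤ N) (hM : 1 ≤ M) (hpbar : 1 ≤ pbar)
    (ε : ℝ) (hε : 0 < ε)
    (lam : Fin pbar → ℝ) (hlam : ∀ p, 0 < lam p)
    (Φ : Matrix (Fin N) (Fin pbar) ℝ)
    (hΦ : ∀ p q, |(Φᵀ * Φ) p q / (N : ℝ) - (if p = q then 1 else 0)| < ε / (pbar : ℝ))
    (rmin : ℝ) (hrmin : 0 < rmin)
    (d : Fin N → ℝ) (hd : ∀ i, rmin ≤ d i) :
    IsUnit (Φ * Matrix.diagonal lam * Φᵀ + (M : ℝ)⁻¹ • Matrix.diagonal d) ∧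
    ∀ φ : Fin pbar → ℝ,
      φ ⬝ᵥ (Matrix.diagonal lam *ᵥ φ) -
        φ ⬝ᵥ ((Matrix.diagonal lam * Φᵀ *
          (Φ * Matrix.diagonal lam * Φᵀ + (M : ℝ)⁻¹ • Matrix.diagonal d)⁻¹ *
          Φ * Matrix.diagonal lam) *ᵥ φ)
      ≥ (1 - ε) * ∑ p, rmin * lam p / (rmin + (N : ℝ) * (M : ℝ) * lam p) * (φ p) ^ 2 := by
  classical
  have hNpos : (0:ℝ) < N := by exact_mod_cast hN
  have hMpos : (0:ℝ) < M := by exact_mod_cast hM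
  set s : Fin N → ℝ := fun i => (M:ℝ)⁻¹ * d i with hs
  have hspos : ∀ i, 0 < s i :=
    fun i => mul_pos (inv_pos.2 hMpos) (lt_of_lt_of_le hrmin (hd i))
  have hSdiag : (M:ℝ)⁻¹ • Matrix.diagonal d = Matrix.diagonal s := by
    rw [← Matrix.diagonal_smul]
    congr 1
  rw [hSdiag]
  set L := Matrix.diagonal lam with hL
  set S := Matrix.diagonal s with hS
  have hLpd : L.PosDef := Matrix.PosDef.diagonal hlam
  have hSpd : S.PosDef := Matrix.PosDef.diagonal hspos
  have hKsd : (Φ * L * Φᵀ).PosSemidef := by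
    have := hLpd.posSemidef.mul_mul_conjTranspose_same Φ
    rwa [Matrix.conjTranspose_eq_transpose_of_trivial] at this
  set A := Φ * L * Φᵀ + S with hA
  have hApd : A.PosDef := Matrix.PosDef.posSemidef_add hKsd hSpd
  refine ⟨hApd.isUnit, ?_⟩
  intro φ
  haveI := hApd.isUnit.invertible
  haveI := hLpd.isUnit.invertible
  haveI := hSpd.isUnit.invertible
  have hLinv : L⁻¹ = Matrix.diagonal fun p => (lam p)⁻¹ := by
    apply Matrix.inv_eq_left_inv
    rw [hL, Matrix.diagonal_mul_diagonal]
    convert Matrix.diagonal_one with p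
    exact inv_mul_cancel₀ (hlam p).ne'
  have hSinv : S⁻¹ = Matrix.diagonal fun i => (s i)⁻¹ := by
    apply Matrix.inv_eq_left_inv
    rw [hS, Matrix.diagonal_mul_diagonal]
    convert Matrix.diagonal_one with i
    exact inv_mul_cancel₀ (hspos i).ne'
  set B := L⁻¹ + Φᵀ * S⁻¹ * Φ with hB
  have hBpd : B.PosDef := by
    rw [hB, hLinv]
    refine Matrix.PosDef.add_posSemidef
      (Matrix.PosDef.diagonal fun p => inv_pos.2 (hlam p)) ?_
    have := ((Matrix.PosDef.diagonal fun i => inv_pos.2 (hspos i)).posSemidef.conjTranspose_mul_mul_same Φ)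
    rw [Matrix.conjTranspose_eq_transpose_of_trivial] at this
    rwa [hSinv]
  haveI := hBpd.isUnit.invertible
  have hkey : B⁻¹ = L - L * Φᵀ * A⁻¹ * Φ * L :=
    Matrix.inv_eq_right_inv (aux_key_inv L S Φ)
  have hLHS : φ ⬝ᵥ (L *ᵥ φ) - φ ⬝ᵥ ((L * Φᵀ * A⁻¹ * Φ * L) *ᵥ φ)
      = φ ⬝ᵥ (B⁻¹ *ᵥ φ) := by
    rw [hkey, Matrix.sub_mulVec, dotProduct_sub]
  rw [hLHS]
  -- comparison matrix
  set κ : ℝ := (1 + ε) * (N:ℝ) * (M:ℝ) / rmin with hκ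
  have hκpos : 0 < κ := by positivity
  set c : Fin pbar → ℝ := fun p => (lam p)⁻¹ + κ with hc
  have hcpos : ∀ p, 0 < c p := fun p => add_pos (inv_pos.2 (hlam p)) hκpos
  set C := Matrix.diagonal c with hC
  have hCpd : C.PosDef := Matrix.PosDef.diagonal hcpos
  haveI := hCpd.isUnit.invertible
  have hCinv : C⁻¹ = Matrix.diagonal fun p => (c p)⁻¹ := by
    apply Matrix.inv_eq_left_inv
    rw [hC, Matrix.diagonal_mul_diagonal]
    convert Matrix.diagonal_one with p
    exact inv_mul_cancel₀ (hcpos p).ne'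
  -- quadratic form comparison  B ≼ C
  have hBC : ∀ x : Fin pbar → ℝ, x ⬝ᵥ (B *ᵥ x) ≤ x ⬝ᵥ (C *ᵥ x) := by
    intro x
    have hq : x ⬝ᵥ ((Φᵀ * S⁻¹ * Φ) *ᵥ x) ≤ κ * ∑ p, x p ^ 2 := by
      have h1 : (Φᵀ * S⁻¹ * Φ) *ᵥ x = Φᵀ *ᵥ (S⁻¹ *ᵥ (Φ *ᵥ x)) := by
        rw [← Matrix.mulVec_mulVec, ← Matrix.mulVec_mulVec]
      rw [h1, Matrix.dotProduct_mulVec, Matrix.vecMul_transpose]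
      set y := Φ *ᵥ x with hy
      have h2 : y ⬝ᵥ (S⁻¹ *ᵥ y) = ∑ i, (s i)⁻¹ * y i ^ 2 := by
        rw [hSinv]
        simp only [dotProduct, Matrix.mulVec_diagonal]
        exact Finset.sum_congr rfl fun i _ => by ring
      rw [h2]
      have h3 : ∀ i, (s i)⁻¹ * y i ^ 2 ≤ ((M:ℝ) / rmin) * y i ^ 2 := by
        intro i
        apply mul_le_mul_of_nonneg_right _ (sq_nonneg _)
        have hsinv : (s i)⁻¹ = (M:ℝ) / d i := by
          simp only [hs, mul_inv, inv_inv, div_eq_mul_inv]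
        rw [hsinv]
        gcongr
        exact hd i
      have h4 : ∑ i, (s i)⁻¹ * y i ^ 2 ≤ ((M:ℝ) / rmin) * ∑ i, y i ^ 2 := by
        rw [Finset.mul_sum]
        exact Finset.sum_le_sum fun i _ => h3 i
      have h5 : ∑ i, y i ^ 2 = x ⬝ᵥ ((Φᵀ * Φ) *ᵥ x) := by
        rw [← Matrix.mulVec_mulVec, Matrix.dotProduct_mulVec, Matrix.vecMul_transpose, ← hy]
        simp only [dotProduct]
        exact Finset.sum_congr rfl fun i _ => by ring
      have h6 := aux_gram hN hpbar ε hε.le Φ hΦ x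
      calc ∑ i, (s i)⁻¹ * y i ^ 2 ≤ ((M:ℝ) / rmin) * ∑ i, y i ^ 2 := h4
        _ = ((M:ℝ) / rmin) * (x ⬝ᵥ ((Φᵀ * Φ) *ᵥ x)) := by rw [h5]
        _ ≤ ((M:ℝ) / rmin) * ((N:ℝ) * (1 + ε) * ∑ p, x p ^ 2) := by
            apply mul_le_mul_of_nonneg_left h6 (by positivity)
        _ = κ * ∑ p, x p ^ 2 := by rw [hκ]; field_simp
    have e1 : x ⬝ᵥ (L⁻¹ *ᵥ x) = ∑ p, (lam p)⁻¹ * x p ^ 2 := by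
      rw [hLinv]
      simp only [dotProduct, Matrix.mulVec_diagonal]
      exact Finset.sum_congr rfl fun p _ => by ring
    have e2 : x ⬝ᵥ (C *ᵥ x) = ∑ p, c p * x p ^ 2 := by
      rw [hC]
      simp only [dotProduct, Matrix.mulVec_diagonal]
      exact Finset.sum_congr rfl fun p _ => by ring
    have e3 : ∑ p, c p * x p ^ 2
        = (∑ p, (lam p)⁻¹ * x p ^ 2) + κ * ∑ p, x p ^ 2 := by
      rw [hc, Finset.mul_sum, ← Finset.sum_add_distrib]
      exact Finset.sum_congr rfl fun p _ => by ring
    have e4 : x ⬝ᵥ (B *ᵥ x) = x ⬝ᵥ (L⁻¹ *ᵥ x) + x ⬝ᵥ ((Φᵀ * S⁻¹ * Φ) *ᵥ x) := by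
      rw [hB, Matrix.add_mulVec, dotProduct_add]
    rw [e2, e3, e4, e1]
    linarith
  -- the inverse comparison via completing the square
  set u := B⁻¹ *ᵥ φ with hu
  set z := C⁻¹ *ᵥ φ with hz
  have hBu : B *ᵥ u = φ := by
    rw [hu, Matrix.mulVec_mulVec, Matrix.mul_inv_of_invertible, Matrix.one_mulVec]
  have hCz : C *ᵥ z = φ := by
    rw [hz, Matrix.mulVec_mulVec, Matrix.mul_inv_of_invertible, Matrix.one_mulVec]
  have hBt : Bᵀ = B := by
    have h := hBpd.isHermitian
    rwa [Matrix.IsHermitian, Matrix.conjTranspose_eq_transpose_of_trivial] at h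
  have hsym : ∀ v w : Fin pbar → ℝ, v ⬝ᵥ (B *ᵥ w) = (B *ᵥ v) ⬝ᵥ w := by
    intro v w
    rw [Matrix.dotProduct_mulVec, ← Matrix.vecMul_transpose, hBt]
  have hpos : 0 ≤ (u - z) ⬝ᵥ (B *ᵥ (u - z)) := by
    have h := hBpd.posSemidef.dotProduct_mulVec_nonneg (u - z)
    simpa using h
  have hexp : (u - z) ⬝ᵥ (B *ᵥ (u - z))
      = φ ⬝ᵥ u - 2 * (φ ⬝ᵥ z) + z ⬝ᵥ (B *ᵥ z) := by
    rw [Matrix.mulVec_sub, sub_dotProduct, dotProduct_sub, dotProduct_sub]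
    have h1 : z ⬝ᵥ (B *ᵥ u) = z ⬝ᵥ φ := by rw [hBu]
    have h2 : u ⬝ᵥ (B *ᵥ z) = φ ⬝ᵥ z := by rw [hsym u z, hBu]
    have h3 : u ⬝ᵥ (B *ᵥ u) = φ ⬝ᵥ u := by rw [hBu, dotProduct_comm]
    rw [h1, h2, h3, dotProduct_comm z φ]
    ring
  have hzCz : z ⬝ᵥ (C *ᵥ z) = φ ⬝ᵥ z := by rw [hCz, dotProduct_comm]
  have hmain : φ ⬝ᵥ z ≤ φ ⬝ᵥ u := by
    have h := hBC z
    rw [hzCz] at h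
    rw [hexp] at hpos
    linarith
  have hzval : φ ⬝ᵥ z = ∑ p, (c p)⁻¹ * φ p ^ 2 := by
    rw [hz, hCinv]
    simp only [dotProduct, Matrix.mulVec_diagonal]
    exact Finset.sum_congr rfl fun p _ => by ring
  -- per-term bound
  have hterm : ∀ p, (1 - ε) * (rmin * lam p / (rmin + (N:ℝ) * (M:ℝ) * lam p) * φ p ^ 2)
      ≤ (c p)⁻¹ * φ p ^ 2 := by
    intro p
    rw [← mul_assoc]
    apply mul_le_mul_of_nonneg_right _ (sq_nonneg _)
    have hl := hlam p
    have hden1 : 0 < rmin + (N:ℝ) * (M:ℝ) * lam p := by positivity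
    have hden2 : 0 < rmin + (1 + ε) * (N:ℝ) * (M:ℝ) * lam p := by positivity
    have hcp : (c p)⁻¹ = rmin * lam p / (rmin + (1 + ε) * (N:ℝ) * (M:ℝ) * lam p) := by
      rw [hc, hκ]
      rw [eq_div_iff hden2.ne']
      field_simp
    rw [hcp, mul_div_assoc'] -- (1-ε) * (a/b) = ((1-ε)*a)/b
    rw [div_le_div_iff₀ hden1 hden2]
    nlinarith [mul_pos (mul_pos hrmin hl) (mul_pos hε hrmin),
      mul_pos (mul_pos (mul_pos hrmin hl) (mul_pos hε hε)) (mul_pos (mul_pos hNpos hMpos) hl)]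
  calc (1 - ε) * ∑ p, rmin * lam p / (rmin + (N:ℝ) * (M:ℝ) * lam p) * φ p ^ 2
      = ∑ p, (1 - ε) * (rmin * lam p / (rmin + (N:ℝ) * (M:ℝ) * lam p) * φ p ^ 2) := by
        rw [Finset.mul_sum]
    _ ≤ ∑ p, (c p)⁻¹ * φ p ^ 2 := Finset.sum_le_sum fun p _ => hterm p
    _ = φ ⬝ᵥ z := hzval.symm
    _ ≤ φ ⬝ᵥ u := hmain
    _ = φ ⬝ᵥ (B⁻¹ *ᵥ φ) := by rw [hu]
end

section
/- Let (Ω, 𝓕, P) be a probability space and let (X_i)_{i∈ℕ} be an i.i.d. sequence of random variables taking values in a measurable space E with common distribution ν. Fix an integer p̄ ≥ 1 and measurable functions φ_1, …, φ_p̄ : E → ℝ, each square-integrable with respect to ν, such that ∫ φ_p φ_q dν = δ_{pq} for all p, q ∈ {1,…,p̄}. Fix reals λ_1, …, λ_p̄ > 0, an integer M ≥ 1, a measurable function r : E → ℝ with r(x) ≥ r_min > 0 for ν-almost every x, and ε > 0. For each N ≥ 1 and ω ∈ Ω, let Φ_N(ω) ∈ ℝ^{N×p̄} be the matrix with entries φ_p(X_i(ω)),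 let Λ = diag(λ_1,…,λ_p̄), let R_N(ω) be the N×N diagonal matrix with entries r(X_i(ω)), and define the integrated posterior variance IMSE_N(ω) = ∫_E [φ(x)ᵀΛφ(x) − φ(x)ᵀΛΦ_N(ω)ᵀ(Φ_N(ω)ΛΦ_N(ω)ᵀ + R_N(ω)/M)^{-1}Φ_N(ω)Λφ(x)] dν(x), where φ(x) = (φ_1(x),…,φ_p̄(x))ᵀ. Then P-almost surely there exists Ñ such that for all N ≥ Ñ, IMSE_N > (1 − ε) · r_min · Σ_{p=1}^{p̄} λ_p/(r_min + N M λ_p). -/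
open Matrix MeasureTheory ProbabilityTheory

section Aux

lemma dot_self_nonneg' {n : ℕ} (v : Fin n → ℝ) : 0 ≤ v ⬝ᵥ v :=
  Finset.sum_nonneg fun i _ => mul_self_nonneg (v i)

/-- Key quadratic-form bound: if `xᵀAx ≥ λ(vᵀx)² + c‖x‖²` for all `x`, then
`vᵀA⁻¹v ≤ s/(c+λs)` where `s = vᵀv`. -/
lemma key_quad {n : ℕ} (A : Matrix (Fin n) (Fin n) ℝ) (v : Fin n → ℝ) (lp c : ℝ)
    (hlp : 0 < lp) (hc : 0 < c)
    (hA : ∀ x : Fin n → ℝ, lp * (v ⬝ᵥ x) ^ 2 + c * (x ⬝ᵥ x) ≤ x ⬝ᵥ (A *ᵥ x)) :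
    v ⬝ᵥ (A⁻¹ *ᵥ v) ≤ (v ⬝ᵥ v) / (c + lp * (v ⬝ᵥ v)) := by
  have hs : 0 ≤ v ⬝ᵥ v := dot_self_nonneg' v
  have hden : 0 < c + lp * (v ⬝ᵥ v) := by positivity
  by_cases hdet : IsUnit A.det
  · set w := A⁻¹ *ᵥ v with hw
    have hAw : A *ᵥ w = v := by
      rw [hw, Matrix.mulVec_mulVec, Matrix.mul_nonsing_inv _ hdet, Matrix.one_mulVec]
    have hvw : w ⬝ᵥ (A *ᵥ w) = v ⬝ᵥ w := by rw [hAw]; exact dotProduct_comm w v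
    have hq := hA w
    rw [hvw] at hq
    have hW : 0 ≤ w ⬝ᵥ w := dot_self_nonneg' w
    have hcs : (v ⬝ᵥ w) ^ 2 ≤ (v ⬝ᵥ v) * (w ⬝ᵥ w) := by
      have h := Finset.sum_mul_sq_le_sq_mul_sq Finset.univ v w
      simpa [dotProduct, pow_two] using h
    have ht0 : 0 ≤ v ⬝ᵥ w := le_trans (by positivity) hq
    rw [le_div_iff₀ hden]
    rcases ht0.eq_or_lt with h0 | hpos
    · rw [← h0]; simpa using hs
    · have h1 : (lp * (v ⬝ᵥ w) ^ 2 + c * (w ⬝ᵥ w)) * (v ⬝ᵥ v) ≤ (v ⬝ᵥ w) * (v ⬝ᵥ v) :=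
        mul_le_mul_of_nonneg_right hq hs
      have h2 : c * (v ⬝ᵥ w) ^ 2 ≤ c * ((v ⬝ᵥ v) * (w ⬝ᵥ w)) :=
        mul_le_mul_of_nonneg_left hcs hc.le
      have h3 : (v ⬝ᵥ w) * ((v ⬝ᵥ w) * (c + lp * (v ⬝ᵥ v))) ≤ (v ⬝ᵥ w) * (v ⬝ᵥ v) := by
        nlinarith
      exact le_of_mul_le_mul_left h3 hpos
  · rw [Matrix.nonsing_inv_apply_not_isUnit _ hdet]
    simpa using div_nonneg hs hden.le

/-- Expansion of the quadratic form of `Φ D Φᵀ`. -/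
lemma quad_expand {n m : ℕ} (Φ : Matrix (Fin n) (Fin m) ℝ) (d : Fin m → ℝ) (x : Fin n → ℝ) :
    x ⬝ᵥ ((Φ * Matrix.diagonal d * Φᵀ) *ᵥ x) = ∑ q, d q * (∑ i, Φ i q * x i) ^ 2 := by
  have h1 : (Φ * Matrix.diagonal d * Φᵀ) *ᵥ x = Φ *ᵥ (Matrix.diagonal d *ᵥ (Φᵀ *ᵥ x)) := by
    rw [Matrix.mulVec_mulVec, Matrix.mulVec_mulVec]
  rw [h1, dotProduct_mulVec, ← Matrix.mulVec_transpose]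
  have h2 : Matrix.diagonal d *ᵥ (Φᵀ *ᵥ x) = fun q => d q * (Φᵀ *ᵥ x) q :=
    funext fun q => Matrix.mulVec_diagonal _ _ q
  rw [h2]
  simp only [dotProduct, Matrix.mulVec, Matrix.transpose_apply]
  exact Finset.sum_congr rfl fun q _ => by ring

/-- Diagonal entry of `D Φᵀ C Φ D`. -/
lemma entry_eq {n m : ℕ} (d : Fin m → ℝ) (Φ : Matrix (Fin n) (Fin m) ℝ)
    (C : Matrix (Fin n) (Fin n) ℝ) (p : Fin m) :
    (Matrix.diagonal d * Φᵀ * C * Φ * Matrix.diagonal d) p p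
      = d p * d p * ((fun i => Φ i p) ⬝ᵥ (C *ᵥ fun i => Φ i p)) := by
  have h3 : (Φᵀ * C * Φ) p p = (fun i => Φ i p) ⬝ᵥ (C *ᵥ fun i => Φ i p) := by
    simp only [Matrix.mul_apply, Matrix.transpose_apply, dotProduct, Matrix.mulVec,
      Finset.sum_mul, Finset.mul_sum]
    rw [Finset.sum_comm]
    exact Finset.sum_congr rfl fun i _ => Finset.sum_congr rfl fun j _ => by ring
  have h4 : Matrix.diagonal d * Φᵀ * C * Φ * Matrix.diagonal d
      = Matrix.diagonal d * (Φᵀ * C * Φ) * Matrix.diagonal d := by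
    simp only [Matrix.mul_assoc]
  rw [h4, Matrix.mul_diagonal, Matrix.diagonal_mul, h3]
  ring

lemma final_arith (lamp c rmin ε s Nr Mr Q : ℝ) (hlamp : 0 < lamp) (hrmin : 0 < rmin)
    (hε : 0 < ε) (hMr : 1 ≤ Mr) (hNr : 0 ≤ Nr) (hc : c = rmin / Mr) (hs0 : 0 ≤ s)
    (hsb : s ≤ (1 + ε) * Nr) (hQ : Q ≤ s / (c + lamp * s)) :
    (1 - ε) * (rmin * (lamp / (rmin + Nr * Mr * lamp))) < lamp - lamp * lamp * Q := by
  have hMr0 : 0 < Mr := lt_of_lt_of_le one_pos hMr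
  have hcpos : 0 < c := hc ▸ div_pos hrmin hMr0
  have hden1 : 0 < c + lamp * s := by positivity
  have hden2 : 0 < c + lamp * ((1 + ε) * Nr) := by positivity
  have hden3 : 0 < rmin + Nr * Mr * lamp := by positivity
  have hcM : c * Mr = rmin := by rw [hc]; field_simp
  have step1 : lamp - lamp * lamp * Q ≥ lamp - lamp * lamp * (s / (c + lamp * s)) := by
    have := mul_le_mul_of_nonneg_left hQ (by positivity : (0:ℝ) ≤ lamp * lamp)
    linarith
  have step2 : lamp - lamp * lamp * (s / (c + lamp * s)) = lamp * c / (c + lamp * s) := by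
    field_simp; ring
  have step3 : lamp * c / (c + lamp * ((1 + ε) * Nr)) ≤ lamp * c / (c + lamp * s) := by
    apply div_le_div_of_nonneg_left (by positivity) hden1
    nlinarith
  have step4 : (1 - ε) * (rmin * (lamp / (rmin + Nr * Mr * lamp)))
      < lamp * c / (c + lamp * ((1 + ε) * Nr)) := by
    rw [show (1 - ε) * (rmin * (lamp / (rmin + Nr * Mr * lamp)))
        = ((1 - ε) * rmin * lamp) / (rmin + Nr * Mr * lamp) by ring]
    rw [div_lt_div_iff₀ hden3 hden2, ← hcM]
    nlinarith [mul_pos (mul_pos (mul_pos hε hcpos) hcpos) (mul_pos hMr0 hlamp),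
      mul_nonneg (mul_nonneg (mul_nonneg (mul_nonneg (sq_nonneg ε) hcpos.le) hMr0.le)
        (mul_nonneg hlamp.le hlamp.le)) hNr]
  linarith

end Aux

/-- The heteroscedastic Gaussian process posterior variance at a point whose
eigenfunction feature vector is `φv`, for a degenerate kernel with eigenvalues
`lam`, feature matrix `Φ` of the `N` observation points, noise variance matrix
`R`, and `M` Monte Carlo samples per point:
`φvᵀΛφv − φvᵀΛΦᵀ(ΦΛΦᵀ + R/M)⁻¹ΦΛφv`. -/
noncomputable def postVar (pbar N : ℕ) (lam : Fin pbar → ℝ) (M : ℕ)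
    (Φ : Matrix (Fin N) (Fin pbar) ℝ) (R : Matrix (Fin N) (Fin N) ℝ)
    (φv : Fin pbar → ℝ) : ℝ :=
  φv ⬝ᵥ (Matrix.diagonal lam *ᵥ φv) -
    φv ⬝ᵥ ((Matrix.diagonal lam * Φᵀ *
      (Φ * Matrix.diagonal lam * Φᵀ + (M : ℝ)⁻¹ • R)⁻¹ * Φ * Matrix.diagonal lam) *ᵥ φv)

lemma integral_postVar {E : Type*} [MeasurableSpace E] (ν : Measure E) [IsProbabilityMeasure ν]
    (pbar N : ℕ) (lam : Fin pbar → ℝ) (M : ℕ) (φ : Fin pbar → E → ℝ)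
    (hmul : ∀ p q, Integrable (fun x => φ p x * φ q x) ν)
    (horth : ∀ p q, ∫ x, φ p x * φ q x ∂ν = if p = q then 1 else 0)
    (Φ : Matrix (Fin N) (Fin pbar) ℝ) (R : Matrix (Fin N) (Fin N) ℝ) :
    ∫ x, postVar pbar N lam M Φ R (fun p => φ p x) ∂ν
      = ∑ p, (lam p
          - (Matrix.diagonal lam * Φᵀ * (Φ * Matrix.diagonal lam * Φᵀ + (M : ℝ)⁻¹ • R)⁻¹
              * Φ * Matrix.diagonal lam) p p) := by
  set B := Matrix.diagonal lam * Φᵀ * (Φ * Matrix.diagonal lam * Φᵀ + (M : ℝ)⁻¹ • R)⁻¹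
      * Φ * Matrix.diagonal lam with hB
  have hpoint : ∀ x : E, postVar pbar N lam M Φ R (fun p => φ p x)
      = (∑ p, lam p * (φ p x * φ p x)) - ∑ p, ∑ q, B p q * (φ p x * φ q x) := by
    intro x
    unfold postVar
    rw [← hB]
    congr 1
    · simp only [dotProduct, Matrix.mulVec_diagonal]
      exact Finset.sum_congr rfl fun p _ => by ring
    · simp only [dotProduct, Matrix.mulVec, Finset.mul_sum]
      exact Finset.sum_congr rfl fun p _ => Finset.sum_congr rfl fun q _ => by ring
  have hI1 : Integrable (fun x => ∑ p, lam p * (φ p x * φ p x)) ν :=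
    integrable_finset_sum _ fun p _ => (hmul p p).const_mul (lam p)
  have hI2 : Integrable (fun x => ∑ p, ∑ q, B p q * (φ p x * φ q x)) ν :=
    integrable_finset_sum _ fun p _ => integrable_finset_sum _ fun q _ => (hmul p q).const_mul _
  calc ∫ x, postVar pbar N lam M Φ R (fun p => φ p x) ∂ν
      = ∫ x, ((∑ p, lam p * (φ p x * φ p x)) - ∑ p, ∑ q, B p q * (φ p x * φ q x)) ∂ν :=
        integral_congr_ae (Filter.Eventually.of_forall fun x => hpoint x)
    _ = (∫ x, ∑ p, lam p * (φ p x * φ p x) ∂ν)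
        - ∫ x, ∑ p, ∑ q, B p q * (φ p x * φ q x) ∂ν := integral_sub hI1 hI2
    _ = (∑ p, lam p) - ∑ p, B p p := by
        rw [integral_finset_sum _ fun p _ => (hmul p p).const_mul (lam p),
          integral_finset_sum _ fun p _ =>
            integrable_finset_sum _ fun q _ => (hmul p q).const_mul (B p q)]
        congr 1
        · exact Finset.sum_congr rfl fun p _ => by
            rw [integral_const_mul, horth p p, if_pos rfl, mul_one]
        · exact Finset.sum_congr rfl fun p _ => by
            rw [integral_finset_sum _ fun q _ => (hmul p q).const_mul _]
            simp_rw [integral_const_mul, horth]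
            simp
    _ = ∑ p, (lam p - B p p) := by rw [Finset.sum_sub_distrib]

/-- the paper's Theorem 1 for a degenerate kernel
`k(x,x') = Σ_{p=1}^{p̄} λ_p φ_p(x)φ_p(x')`.  For i.i.d. observation points
`X_1, X_2, …` with distribution `ν`, eigenfunctions `φ_p` orthonormal in
`L²(ν)`, positive eigenvalues `λ_p`, a noise variance function `r ≥ r_min > 0`
(ν-a.e.), Monte Carlo sample size `M ≥ 1`, and any `ε > 0`, almost surely there
exists `N₀` such that for all `N ≥ N₀` the integrated posterior variance
satisfies `IMSE_N > (1 − ε) · r_min · Σ_p λ_p/(r_min + N M λ_p)`. -/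
theorem stmt_1 {Ω E : Type*} [MeasurableSpace Ω] [MeasurableSpace E]
    (P : Measure Ω) [IsProbabilityMeasure P]
    (X : ℕ → Ω → E) (ν : Measure E) [IsProbabilityMeasure ν]
    (hXmeas : ∀ i, Measurable (X i))
    (hindep : iIndepFun X P)
    (hdist : ∀ i, Measure.map (X i) P = ν)
    (pbar : ℕ) (hpbar : 1 ≤ pbar)
    (φ : Fin pbar → E → ℝ) (hφmeas : ∀ p, Measurable (φ p))
    (hφL2 : ∀ p, MemLp (φ p) 2 ν)
    (horth : ∀ p q, ∫ x, φ p x * φ q x ∂ν = if p = q then 1 else 0)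
    (lam : Fin pbar → ℝ) (hlam : ∀ p, 0 < lam p)
    (M : ℕ) (hM : 1 ≤ M)
    (r : E → ℝ) (hrmeas : Measurable r)
    (rmin : ℝ) (hrmin : 0 < rmin) (hrge : ∀ᵐ x ∂ν, rmin ≤ r x)
    (ε : ℝ) (hε : 0 < ε) :
    ∀ᵐ ω ∂P, ∃ N₀ : ℕ, ∀ N, N₀ ≤ N →
      (∫ x, postVar pbar N lam M
          (Matrix.of fun (i : Fin N) p => φ p (X i ω))
          (Matrix.diagonal fun (i : Fin N) => r (X i ω))
          (fun p => φ p x) ∂ν)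
        > (1 - ε) * (rmin * ∑ p, lam p / (rmin + (N : ℝ) * (M : ℝ) * lam p)) := by
  -- products of eigenfunctions are integrable
  have hmul : ∀ p q, Integrable (fun x => φ p x * φ q x) ν := by
    intro p q
    have h : MemLp (φ p • φ q) (1 : ENNReal) ν :=
      (hφL2 q).smul (hφL2 p) (hpqr := ⟨by simp [ENNReal.inv_two_add_inv_two, one_div]⟩)
    rw [memLp_one_iff_integrable] at h
    exact h
  have hgmeas : ∀ p : Fin pbar, Measurable (fun y => φ p y * φ p y) :=
    fun p => (hφmeas p).mul (hφmeas p)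
  -- strong law of large numbers for each `p`
  have hlln : ∀ᵐ ω ∂P, ∀ p : Fin pbar,
      Filter.Tendsto (fun n : ℕ => (∑ i ∈ Finset.range n, φ p (X i ω) * φ p (X i ω)) / n)
        Filter.atTop (nhds 1) := by
    rw [ae_all_iff]
    intro p
    have hint : Integrable (fun ω => φ p (X 0 ω) * φ p (X 0 ω)) P := by
      have h := hmul p p
      rw [← hdist 0] at h
      exact (integrable_map_measure (hgmeas p).aestronglyMeasurable
        (hXmeas 0).aemeasurable).mp h
    have hpair : Pairwise (Function.onFun (IndepFun · · P) fun i ω => φ p (X i ω) * φ p (X i ω)) := by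
      intro i j hij
      exact (hindep.indepFun hij).comp (hgmeas p) (hgmeas p)
    have hident : ∀ i, IdentDistrib (fun ω => φ p (X i ω) * φ p (X i ω))
        (fun ω => φ p (X 0 ω) * φ p (X 0 ω)) P P := by
      intro i
      have hX : IdentDistrib (X i) (X 0) P P :=
        ⟨(hXmeas i).aemeasurable, (hXmeas 0).aemeasurable, by rw [hdist i, hdist 0]⟩
      exact hX.comp (hgmeas p)
    have hmean : (∫ ω, φ p (X 0 ω) * φ p (X 0 ω) ∂P) = 1 := by
      have h1 := integral_map (μ := P) (hXmeas 0).aemeasurable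
        (f := fun y => φ p y * φ p y) (hgmeas p).aestronglyMeasurable
      rw [hdist 0] at h1
      rw [← h1, horth p p, if_pos rfl]
    have h := strong_law_ae_real _ hint hpair hident
    filter_upwards [h] with ω hω
    convert hω using 2
    exact hmean.symm
  -- noise variances are bounded below almost surely
  have hrev : ∀ᵐ ω ∂P, ∀ i : ℕ, rmin ≤ r (X i ω) := by
    rw [ae_all_iff]
    intro i
    have h := hrge
    rw [← hdist i] at h
    exact ae_of_ae_map (hXmeas i).aemeasurable h
  filter_upwards [hlln, hrev] with ω hω1 hω2
  have hev : ∀ᶠ n : ℕ in Filter.atTop, ∀ p : Fin pbar,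
      (∑ i ∈ Finset.range n, φ p (X i ω) * φ p (X i ω)) / n < 1 + ε :=
    Filter.eventually_all.mpr fun p => (hω1 p).eventually_lt_const (by linarith)
  obtain ⟨N₁, hN₁⟩ := Filter.eventually_atTop.mp hev
  refine ⟨max N₁ 1, fun N hN => ?_⟩
  have hN1 : 1 ≤ N := le_trans (le_max_right _ _) hN
  have hNr : (0:ℝ) < N := by
    have : (0:ℕ) < N := by omega
    exact_mod_cast this
  have hMr : (1:ℝ) ≤ (M:ℝ) := by exact_mod_cast hM
  have hMpos : (0:ℝ) < (M:ℝ) := lt_of_lt_of_le one_pos hMr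
  rw [integral_postVar ν pbar N lam M φ hmul horth
    (Matrix.of fun (i : Fin N) p => φ p (X i ω))
    (Matrix.diagonal fun (i : Fin N) => r (X i ω))]
  set Φm : Matrix (Fin N) (Fin pbar) ℝ := Matrix.of fun (i : Fin N) p => φ p (X i ω) with hΦm
  set Rm : Matrix (Fin N) (Fin N) ℝ := Matrix.diagonal fun (i : Fin N) => r (X i ω) with hRm
  set A : Matrix (Fin N) (Fin N) ℝ := Φm * Matrix.diagonal lam * Φmᵀ + (M : ℝ)⁻¹ • Rm with hA
  set c : ℝ := rmin / (M:ℝ) with hc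
  have hcpos : 0 < c := div_pos hrmin hMpos
  -- quadratic form lower bound for A
  have hquad : ∀ p (x : Fin N → ℝ),
      lam p * ((fun i => Φm i p) ⬝ᵥ x) ^ 2 + c * (x ⬝ᵥ x) ≤ x ⬝ᵥ (A *ᵥ x) := by
    intro p x
    rw [hA, Matrix.add_mulVec, dotProduct_add]
    have h1 : lam p * ((fun i => Φm i p) ⬝ᵥ x) ^ 2
        ≤ x ⬝ᵥ ((Φm * Matrix.diagonal lam * Φmᵀ) *ᵥ x) := by
      rw [quad_expand]
      have hvx : ((fun i => Φm i p) ⬝ᵥ x) = ∑ i, Φm i p * x i := rfl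
      rw [hvx]
      exact Finset.single_le_sum (f := fun q => lam q * (∑ i, Φm i q * x i) ^ 2)
        (fun q _ => mul_nonneg (hlam q).le (sq_nonneg _)) (Finset.mem_univ p)
    have h2 : c * (x ⬝ᵥ x) ≤ x ⬝ᵥ (((M:ℝ)⁻¹ • Rm) *ᵥ x) := by
      rw [Matrix.smul_mulVec, dotProduct_smul, smul_eq_mul]
      have h3 : x ⬝ᵥ (Rm *ᵥ x) = ∑ i, x i * (r (X i ω) * x i) := by
        rw [hRm]
        simp only [dotProduct]
        exact Finset.sum_congr rfl fun i _ => by rw [Matrix.mulVec_diagonal]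
      have h4 : rmin * (x ⬝ᵥ x) ≤ x ⬝ᵥ (Rm *ᵥ x) := by
        rw [h3, dotProduct, Finset.mul_sum]
        apply Finset.sum_le_sum
        intro i _
        have hri := hω2 i
        nlinarith [mul_self_nonneg (x i)]
      calc c * (x ⬝ᵥ x) = (M:ℝ)⁻¹ * (rmin * (x ⬝ᵥ x)) := by rw [hc]; ring
        _ ≤ (M:ℝ)⁻¹ * (x ⬝ᵥ (Rm *ᵥ x)) := mul_le_mul_of_nonneg_left h4 (by positivity)
    linarith [h1, h2]
  have hkey : ∀ p, (fun i => Φm i p) ⬝ᵥ (A⁻¹ *ᵥ fun i => Φm i p)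
      ≤ ((fun i => Φm i p) ⬝ᵥ fun i => Φm i p)
        / (c + lam p * ((fun i => Φm i p) ⬝ᵥ fun i => Φm i p)) :=
    fun p => key_quad A _ (lam p) c (hlam p) hcpos (hquad p)
  have hsval : ∀ p, ((fun i => Φm i p) ⬝ᵥ fun i => Φm i p)
      = ∑ i ∈ Finset.range N, φ p (X i ω) * φ p (X i ω) := by
    intro p
    simp only [dotProduct, hΦm, Matrix.of_apply]
    exact Fin.sum_univ_eq_sum_range (fun i => φ p (X i ω) * φ p (X i ω)) N
  have hsb : ∀ p, ((fun i => Φm i p) ⬝ᵥ fun i => Φm i p) ≤ (1 + ε) * (N:ℝ) := by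
    intro p
    rw [hsval p]
    have h := hN₁ N (le_trans (le_max_left _ _) hN) p
    rw [div_lt_iff₀ hNr] at h
    linarith
  have hs0 : ∀ p, 0 ≤ ((fun i => Φm i p) ⬝ᵥ fun i => Φm i p) := fun p => dot_self_nonneg' _
  rw [gt_iff_lt, Finset.mul_sum, Finset.mul_sum]
  apply Finset.sum_lt_sum_of_nonempty
  · haveI : NeZero pbar := ⟨by omega⟩
    exact Finset.univ_nonempty
  · intro p _
    rw [entry_eq lam Φm A⁻¹ p]
    exact final_arith (lam p) c rmin ε _ (N:ℝ) (M:ℝ) _ (hlam p) hrmin hε hMr hNr.le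
      hc (hs0 p) (hsb p) (hkey p)
end
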